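/- Let n ≥ 3 and λ > 0. The effective degrees of freedom tr(B_m) = tr(I_n − (I_n − S(λ))ᵐ) are strictly increasing in the integer m ≥ 1, i.e. tr(B_{m+1}) > tr(B_m), and have strictly decreasing increments, i.e. tr(B_{m+2}) − tr(B_{m+1}) < tr(B_{m+1}) − tr(B_m) for all m ≥ 1. -/

import Mathlib

open Matrix Filter

noncomputable section

/-- The second-differencing matrix `Dᵀ` of the HP filter: the `(n−2) × n` real matrix with
`(Dᵀ f)_j = f_j − 2 f_{j+1} + f_{j+2}` (here written with 0-based indices). -/
def secondDiff (n : ℕ) : Matrix (Fin (n - 2)) (Fin n) ℝ := fun j t =>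
  if t.1 = j.1 then 1 else if t.1 = j.1 + 1 then -2 else if t.1 = j.1 + 2 then 1 else 0

/-- The HP smoothing matrix `S(λ) = (I_n + λ D Dᵀ)⁻¹`, where `Dᵀ = secondDiff n`. -/
def hpS (n : ℕ) (lam : ℝ) : Matrix (Fin n) (Fin n) ℝ :=
  (1 + lam • ((secondDiff n)ᵀ * secondDiff n))⁻¹

section Aux

set_option linter.unusedSectionVars false

variable {ι : Type*} [Fintype ι] [DecidableEq ι]

open scoped MatrixOrder

private lemma herm_transpose' {Q : Matrix ι ι ℝ} (h : Q.IsHermitian) : Qᵀ = Q := by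
  rw [← conjTranspose_eq_transpose_of_trivial]; exact h

private lemma trace_mul_transpose_self_pos' {M : Matrix ι ι ℝ} (h : M ≠ 0) :
    0 < (M * Mᵀ).trace := by
  have htr : (M * Mᵀ).trace = ∑ i, ∑ j, (M i j) ^ 2 := by
    simp [Matrix.trace, Matrix.mul_apply, Matrix.diag, sq]
  obtain ⟨i, j, hij⟩ : ∃ i j, M i j ≠ 0 := by
    by_contra h'
    push_neg at h'
    exact h (by ext i j; simp [h'])
  rw [htr]
  refine Finset.sum_pos' (fun i _ => Finset.sum_nonneg fun j _ => sq_nonneg _)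
    ⟨i, Finset.mem_univ i, ?_⟩
  exact Finset.sum_pos' (fun j _ => sq_nonneg _) ⟨j, Finset.mem_univ j, by positivity⟩

private lemma herm_sq_eq_zero' {Q : Matrix ι ι ℝ} (hQ : Q.IsHermitian) (h : Q * Q = 0) :
    Q = 0 := by
  by_contra h0
  have := trace_mul_transpose_self_pos' h0
  rw [herm_transpose' hQ, h] at this
  simp at this

private lemma psd_pow_eq_zero' {P : Matrix ι ι ℝ} (hP : P.PosSemidef) :
    ∀ m : ℕ, P ^ m = 0 → P = 0 := by
  intro m
  induction m using Nat.strong_induction_on with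
  | _ m ih =>
    intro hm
    match m, hm with
    | 0, hm =>
      have : P = P ^ 0 * P := by simp
      rw [hm, zero_mul] at this
      exact this
    | 1, hm => simpa using hm
    | (m + 2), hm =>
      have hsq : P ^ (m + 1) * P ^ (m + 1) = 0 := by
        have : P ^ (m + 1) * P ^ (m + 1) = P ^ (m + 2) * P ^ m := by
          rw [← pow_add, ← pow_add]; ring_nf
        rw [this, hm, zero_mul]
      have := herm_sq_eq_zero' (hP.pow (m + 1)).isHermitian hsq
      exact ih (m + 1) (by omega) this

private lemma trace_mul_pos' {A B : Matrix ι ι ℝ} (hA : A.PosSemidef) (hA0 : A ≠ 0)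
    (hB : B.PosDef) : 0 < (A * B).trace := by
  set C := CFC.sqrt A with hCdef
  have hC : C.PosSemidef := (CFC.sqrt_nonneg A).posSemidef
  have hC2 : C * C = A := by have := CFC.sq_sqrt A hA.nonneg; rwa [sq] at this
  set T := CFC.sqrt B with hTdef
  have hT : T.PosSemidef := (CFC.sqrt_nonneg B).posSemidef
  have hT2 : T * T = B := by have := CFC.sq_sqrt B hB.posSemidef.nonneg; rwa [sq] at this
  have hTdet : IsUnit T.det := by
    have hdB : T.det * T.det = B.det := by rw [← det_mul, hT2]
    have : T.det ≠ 0 := by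
      intro h0
      have := hB.det_pos
      rw [← hdB, h0, mul_zero] at this
      exact lt_irrefl _ this
    exact this.isUnit
  have hX0 : C * T ≠ 0 := by
    intro h0
    have hC0 : C = 0 := by
      have := congrArg (fun X => X * T⁻¹) h0
      simp only [zero_mul, mul_assoc, Matrix.mul_nonsing_inv _ hTdet, mul_one] at this
      exact this
    apply hA0
    rw [← hC2, hC0, zero_mul]
  have key : (A * B).trace = ((C * T) * (C * T)ᵀ).trace := by
    have hXT : (C * T)ᵀ = T * C := by
      rw [transpose_mul, herm_transpose' hC.isHermitian, herm_transpose' hT.isHermitian]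
    rw [hXT, ← hC2, ← hT2]
    rw [show C * C * (T * T) = C * (C * (T * T)) by noncomm_ring,
      show C * T * (T * C) = (C * (T * T)) * C by noncomm_ring]
    exact trace_mul_comm C _
  rw [key]
  exact trace_mul_transpose_self_pos' hX0

private lemma posDef_mul_self' {B : Matrix ι ι ℝ} (hB : B.PosDef) : (B * B).PosDef := by
  refine posDef_iff_dotProduct_mulVec.mpr ⟨?_, fun x hx => ?_⟩
  · have h := herm_transpose' hB.isHermitian
    rw [IsHermitian, conjTranspose_eq_transpose_of_trivial, transpose_mul, h]
  · have hy : B *ᵥ x ≠ 0 :=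
      (Matrix.mulVec_injective_iff_isUnit.mpr hB.isUnit).ne_iff' (by simp) |>.2 hx
    have heq : star x ⬝ᵥ ((B * B) *ᵥ x) = star (B *ᵥ x) ⬝ᵥ (B *ᵥ x) := by
      rw [← mulVec_mulVec, dotProduct_mulVec]
      congr 1
      simp only [star_trivial]
      rw [← mulVec_transpose, herm_transpose' hB.isHermitian]
    rw [heq]
    exact Matrix.dotProduct_star_self_pos_iff.mpr hy

end Aux

/-- For `n ≥ 3` and `λ > 0`, the effective degrees of freedom
`tr(B_m) = tr(I_n − (I_n − S(λ))ᵐ)` are strictly increasing in `m ≥ 1` and have strictly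
decreasing increments. -/
theorem stmt12 (n : ℕ) (hn : 3 ≤ n) (lam : ℝ) (hlam : 0 < lam) :
    ∀ m : ℕ, 1 ≤ m →
      Matrix.trace (1 - (1 - hpS n lam) ^ m) <
          Matrix.trace (1 - (1 - hpS n lam) ^ (m + 1)) ∧
        Matrix.trace (1 - (1 - hpS n lam) ^ (m + 2)) -
            Matrix.trace (1 - (1 - hpS n lam) ^ (m + 1)) <
          Matrix.trace (1 - (1 - hpS n lam) ^ (m + 1)) -
            Matrix.trace (1 - (1 - hpS n lam) ^ m) := by
  classical
  set G : Matrix (Fin (n - 2)) (Fin n) ℝ := secondDiff n with hGdef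
  set E : Matrix (Fin n) (Fin n) ℝ := Gᵀ * G with hEdef
  set F : Matrix (Fin n) (Fin n) ℝ := lam • E with hFdef
  set M : Matrix (Fin n) (Fin n) ℝ := 1 + F with hMdef
  have hSdef : hpS n lam = M⁻¹ := rfl
  have hE : E.PosSemidef := by
    rw [hEdef, ← conjTranspose_eq_transpose_of_trivial]
    exact posSemidef_conjTranspose_mul_self G
  have hF : F.PosSemidef := by
    refine posSemidef_iff_dotProduct_mulVec.mpr ⟨?_, fun x => ?_⟩
    · rw [IsHermitian, conjTranspose_eq_transpose_of_trivial, hFdef, transpose_smul,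
        herm_transpose' hE.isHermitian]
    · rw [hFdef, smul_mulVec, dotProduct_smul, smul_eq_mul]
      exact mul_nonneg hlam.le (hE.dotProduct_mulVec_nonneg x)
  have hM : M.PosDef := Matrix.PosDef.one.add_posSemidef hF
  have hdet : IsUnit M.det := hM.det_pos.ne'.isUnit
  set S : Matrix (Fin n) (Fin n) ℝ := hpS n lam with hSSdef
  have hS : S.PosDef := by rw [hSdef]; exact hM.inv
  have hSM : S * M = 1 := by rw [hSdef]; exact Matrix.nonsing_inv_mul M hdet
  have hMS : M * S = 1 := by rw [hSdef]; exact Matrix.mul_nonsing_inv M hdet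
  set A : Matrix (Fin n) (Fin n) ℝ := 1 - S with hAdef
  have hA : A.PosSemidef := by
    have hFF : (F * F).PosSemidef := by
      have := posSemidef_conjTranspose_mul_self F
      rwa [conjTranspose_eq_transpose_of_trivial, herm_transpose' hF.isHermitian] at this
    have hX : (F + F * F).PosSemidef := hF.add hFF
    have h1 : (S * (F + F * F) * Sᴴ).PosSemidef := hX.mul_mul_conjTranspose_same S
    rw [hS.isHermitian.eq] at h1
    have h2 : S * (F + F * F) * S = A := by
      have hMM : F + F * F = M * M - M := by rw [hMdef]; noncomm_ring
      calc S * (F + F * F) * S = (S * M) * (M * S) - (S * M) * S := by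
            rw [hMM]; noncomm_ring
        _ = A := by rw [hSM, hMS, one_mul, one_mul, hAdef]
    rwa [h2] at h1
  have hE00 : E ⟨0, by omega⟩ ⟨0, by omega⟩ = 1 := by
    rw [hEdef]
    rw [Matrix.mul_apply]
    rw [Finset.sum_eq_single (⟨0, by omega⟩ : Fin (n - 2))]
    · simp [hGdef, secondDiff]
    · intro j _ hj
      have hj0 : j.1 ≠ 0 := fun h => hj (by exact Fin.ext h)
      simp [hGdef, secondDiff, transpose_apply]
      intro h
      omega
    · simp
  have hA0 : A ≠ 0 := by
    intro h0
    have hS1 : S = 1 := by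
      have h1 : (1 : Matrix (Fin n) (Fin n) ℝ) - S = 0 := by rw [← hAdef]; exact h0
      exact (sub_eq_zero.mp h1).symm
    have hM1 : M = 1 := by rw [← hMS, hS1, mul_one]
    have hF0 : F = 0 := by
      have h1 : (1 : Matrix (Fin n) (Fin n) ℝ) + F = 1 := by rw [← hMdef, hM1]
      have := congrArg (fun X => X - 1) h1
      simpa using this
    have hE0 : E = 0 := by
      rcases smul_eq_zero.mp (hFdef ▸ hF0) with h | h
      · exact absurd h hlam.ne'
      · exact h
    rw [hE0] at hE00
    simp at hE00
  intro m _hm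
  have hAm : (A ^ m).PosSemidef := hA.pow m
  have hAm0 : A ^ m ≠ 0 := fun h => hA0 (psd_pow_eq_zero' hA m h)
  have pos1 : 0 < (A ^ m * S).trace := trace_mul_pos' hAm hAm0 hS
  have pos2 : 0 < (A ^ m * (S * S)).trace := trace_mul_pos' hAm hAm0 (posDef_mul_self' hS)
  have e1 : A ^ (m + 1) = A ^ m - A ^ m * S := by
    rw [pow_succ, hAdef, mul_sub, mul_one]
  have e2 : A ^ (m + 2) = A ^ (m + 1) - A ^ (m + 1) * S := by
    rw [pow_succ, hAdef, mul_sub, mul_one]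
  have e3 : A ^ (m + 1) * S = A ^ m * S - A ^ m * (S * S) := by
    have hAS : A * S = S - S * S := by rw [hAdef, sub_mul, one_mul]
    rw [pow_succ, mul_assoc, hAS, mul_sub]
  have t1 : (A ^ (m + 1)).trace = (A ^ m).trace - (A ^ m * S).trace := by
    rw [e1, trace_sub]
  have t2 : (A ^ (m + 2)).trace = (A ^ (m + 1)).trace - (A ^ (m + 1) * S).trace := by
    rw [e2, trace_sub]
  have t3 : (A ^ (m + 1) * S).trace = (A ^ m * S).trace - (A ^ m * (S * S)).trace := by
    rw [e3, trace_sub]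
  constructor
  · rw [trace_sub, trace_sub]
    linarith
  · rw [trace_sub, trace_sub, trace_sub]
    linarith

end
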